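/- Every element Σ_i a_i⊗h_i⊗b_i⊗g_i of H1□H1 ⊆ (A⊗H)⊗(A⊗H) satisfies the three identities: (a) Σ_i a_i ⊗ ε(h_i) d((b_i)_(1))(g_i)_(1) ⊗ (b_i)_(2) ⊗ (g_i)_(2) = Σ_i a_i ⊗ h_i ⊗ b_i ⊗ g_i in A⊗H⊗A⊗H; (b) Σ_i a_i ⊗ ε(b_i) h_i ⊗ g_i = Σ_i a_i ⊗ ε(h_i) d(b_i)(g_i)_(1) ⊗ (g_i)_(2) in A⊗H⊗H; (c) Σ_i ε(b_i)ε(g_i) a_i ⊗ h_i = Σ_i ε(h_i) a_i ⊗ d(b_i)g_i in A⊗H. (Established in the proof of Theorem 2.6.) -/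

import Mathlib

open TensorProduct

noncomputable section

variable (k A H : Type*) [Field k] [Ring A] [Ring H]
  [HopfAlgebra k A] [HopfAlgebra k H]

/-- `t(a⊗h) = d(a)h`. -/
def tmap (d : A →ₗ[k] H) : A ⊗[k] H →ₗ[k] H :=
  LinearMap.mul' k H ∘ₗ map d LinearMap.id

/-- `s(a⊗h) = ε(a)h`. -/
def smap : A ⊗[k] H →ₗ[k] H :=
  (TensorProduct.lid k H).toLinearMap ∘ₗ map (Coalgebra.counit : A →ₗ[k] k) LinearMap.id

/-- `i(h) = 1⊗h`. -/
def imap : H →ₗ[k] A ⊗[k] H := TensorProduct.mk k A H 1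

/-- The tensor-product coproduct `Δ(a⊗h) = (a₁⊗h₁) ⊗ (a₂⊗h₂)` on `H1 = A ⊗ H`. -/
def comul1 : A ⊗[k] H →ₗ[k] (A ⊗[k] H) ⊗[k] (A ⊗[k] H) :=
  (tensorTensorTensorComm k A A H H).toLinearMap ∘ₗ
    map (Coalgebra.comul : A →ₗ[k] A ⊗[k] A) (Coalgebra.comul : H →ₗ[k] H ⊗[k] H)

/-- The tensor-product counit `ε(a⊗h) = ε(a)ε(h)` on `H1 = A ⊗ H`. -/
def counit1 : A ⊗[k] H →ₗ[k] k :=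
  (TensorProduct.lid k k).toLinearMap ∘ₗ
    map (Coalgebra.counit : A →ₗ[k] k) (Coalgebra.counit : H →ₗ[k] k)

/-- The left coaction `DL = (t⊗id)Δ`. -/
def DLmap (d : A →ₗ[k] H) : A ⊗[k] H →ₗ[k] H ⊗[k] (A ⊗[k] H) :=
  map (tmap k A H d) LinearMap.id ∘ₗ comul1 k A H

/-- The right coaction `DR = (id⊗s)Δ`. -/
def DRmap : A ⊗[k] H →ₗ[k] (A ⊗[k] H) ⊗[k] H :=
  map LinearMap.id (smap k A H) ∘ₗ comul1 k A H

/-- The second product `(a⊗h)∘(b⊗g) = ε(h) ab ⊗ g`. -/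
def circ : (A ⊗[k] H) ⊗[k] (A ⊗[k] H) →ₗ[k] A ⊗[k] H :=
  map (LinearMap.mul' k A)
      ((TensorProduct.lid k H).toLinearMap ∘ₗ map (Coalgebra.counit : H →ₗ[k] k) LinearMap.id)
    ∘ₗ (tensorTensorTensorComm k A H A H).toLinearMap

/-- The quantum groupoid antipode `𝒮(a⊗h) = S(a₁) ⊗ d(a₂)h`. -/
def SS (d : A →ₗ[k] H) : A ⊗[k] H →ₗ[k] A ⊗[k] H :=
  map (HopfAlgebra.antipode (R := k) : A →ₗ[k] A) (tmap k A H d)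
    ∘ₗ (TensorProduct.assoc k A A H).toLinearMap
    ∘ₗ map (Coalgebra.comul : A →ₗ[k] A ⊗[k] A) LinearMap.id

/-- The smash product multiplication `(a⊗h)(b⊗g) = a(h₁▷b) ⊗ h₂g`. -/
def smashMul (act : H ⊗[k] A →ₗ[k] A) :
    (A ⊗[k] H) ⊗[k] (A ⊗[k] H) →ₗ[k] A ⊗[k] H :=
  map (LinearMap.mul' k A) LinearMap.id
  ∘ₗ (TensorProduct.assoc k A A H).symm.toLinearMap
  ∘ₗ map LinearMap.id
      (map act (LinearMap.mul' k H)
        ∘ₗ (tensorTensorTensorComm k H H A H).toLinearMap)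
  ∘ₗ (TensorProduct.assoc k A (H ⊗[k] H) (A ⊗[k] H)).toLinearMap
  ∘ₗ map (map LinearMap.id (Coalgebra.comul : H →ₗ[k] H ⊗[k] H)) LinearMap.id

/-- The cotensor product `H1□H1`. -/
def cot (d : A →ₗ[k] H) : Set ((A ⊗[k] H) ⊗[k] (A ⊗[k] H)) :=
  {x | (TensorProduct.assoc k (A ⊗[k] H) H (A ⊗[k] H)).toLinearMap
        (map (DRmap k A H) LinearMap.id x) = map LinearMap.id (DLmap k A H d) x}

/-- A Hopf (algebra) crossed module. -/
structure HopfCrossedModule (act : H ⊗[k] A →ₗ[k] A) (d : A →ₗ[k] H) : Prop where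
  /-- `(hg)▷a = h▷(g▷a)` -/
  act_mul : ∀ (h g : H) (a : A), act ((h * g) ⊗ₜ[k] a) = act (h ⊗ₜ[k] act (g ⊗ₜ[k] a))
  /-- `1▷a = a` -/
  act_one : ∀ a : A, act ((1 : H) ⊗ₜ[k] a) = a
  /-- `h▷(ab) = (h₁▷a)(h₂▷b)` -/
  act_mul_alg : act ∘ₗ map LinearMap.id (LinearMap.mul' k A)
      = LinearMap.mul' k A ∘ₗ map act act
          ∘ₗ (tensorTensorTensorComm k H H A A).toLinearMap
          ∘ₗ map (Coalgebra.comul : H →ₗ[k] H ⊗[k] H) LinearMap.id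
  /-- `h▷1 = ε(h)1` -/
  act_unit : ∀ h : H, act (h ⊗ₜ[k] (1 : A)) = (Coalgebra.counit h : k) • (1 : A)
  /-- `Δ(h▷a) = (h₁▷a₁)⊗(h₂▷a₂)` -/
  act_comul : (Coalgebra.comul : A →ₗ[k] A ⊗[k] A) ∘ₗ act
      = map act act ∘ₗ (tensorTensorTensorComm k H H A A).toLinearMap
          ∘ₗ map (Coalgebra.comul : H →ₗ[k] H ⊗[k] H) (Coalgebra.comul : A →ₗ[k] A ⊗[k] A)
  /-- `ε(h▷a) = ε(h)ε(a)` -/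
  act_counit : ∀ (h : H) (a : A),
      (Coalgebra.counit (act (h ⊗ₜ[k] a)) : k) = Coalgebra.counit h * Coalgebra.counit a
  /-- `h₁ ⊗ (h₂▷a) = h₂ ⊗ (h₁▷a)` -/
  act_cocomm : map LinearMap.id act ∘ₗ (TensorProduct.assoc k H H A).toLinearMap
        ∘ₗ map (Coalgebra.comul : H →ₗ[k] H ⊗[k] H) LinearMap.id
      = map LinearMap.id act ∘ₗ (TensorProduct.assoc k H H A).toLinearMap
        ∘ₗ map ((TensorProduct.comm k H H).toLinearMap
              ∘ₗ (Coalgebra.comul : H →ₗ[k] H ⊗[k] H)) LinearMap.id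
  /-- `d` is multiplicative -/
  d_mul : ∀ a b : A, d (a * b) = d a * d b
  /-- `d(1) = 1` -/
  d_one : d 1 = 1
  /-- `d` is comultiplicative -/
  d_comul : (Coalgebra.comul : H →ₗ[k] H ⊗[k] H) ∘ₗ d
      = map d d ∘ₗ (Coalgebra.comul : A →ₗ[k] A ⊗[k] A)
  /-- `ε∘d = ε` -/
  d_counit : (Coalgebra.counit : H →ₗ[k] k) ∘ₗ d = (Coalgebra.counit : A →ₗ[k] k)
  /-- `d(h▷a) = h₁ d(a) S(h₂)` -/
  d_act : d ∘ₗ act = LinearMap.mul' k H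
      ∘ₗ map LinearMap.id (LinearMap.mul' k H
            ∘ₗ map LinearMap.id (HopfAlgebra.antipode (R := k) : H →ₗ[k] H)
            ∘ₗ (TensorProduct.comm k H H).toLinearMap)
      ∘ₗ (TensorProduct.assoc k H H H).toLinearMap
      ∘ₗ map (Coalgebra.comul : H →ₗ[k] H ⊗[k] H) d
  /-- `d(a)▷b = a₁ b S(a₂)` -/
  crossed : act ∘ₗ map d LinearMap.id = LinearMap.mul' k A
      ∘ₗ map LinearMap.id (LinearMap.mul' k A
            ∘ₗ map LinearMap.id (HopfAlgebra.antipode (R := k) : A →ₗ[k] A)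
            ∘ₗ (TensorProduct.comm k A A).toLinearMap)
      ∘ₗ (TensorProduct.assoc k A A A).toLinearMap
      ∘ₗ map (Coalgebra.comul : A →ₗ[k] A ⊗[k] A) LinearMap.id


/-- `e(a⊗h) = ε(h)a`. -/
def emap : A ⊗[k] H →ₗ[k] A :=
  (TensorProduct.rid k A).toLinearMap ∘ₗ map LinearMap.id (Coalgebra.counit : H →ₗ[k] k)

/-- `f(b⊗g) = d(b)g₁ ⊗ g₂`. -/
def fmap (d : A →ₗ[k] H) : A ⊗[k] H →ₗ[k] H ⊗[k] H :=
  map (LinearMap.mul' k H) LinearMap.id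
    ∘ₗ (TensorProduct.assoc k H H H).symm.toLinearMap
    ∘ₗ map d (Coalgebra.comul : H →ₗ[k] H ⊗[k] H)

/-- Theorem 2.6 (part of proof): every element `Σᵢ aᵢ⊗hᵢ⊗bᵢ⊗gᵢ` of `H1□H1` satisfies
(a) `Σ aᵢ ⊗ ε(hᵢ)d((bᵢ)₁)(gᵢ)₁ ⊗ (bᵢ)₂ ⊗ (gᵢ)₂ = Σ aᵢ⊗hᵢ⊗bᵢ⊗gᵢ`;
(b) `Σ aᵢ ⊗ ε(bᵢ)hᵢ ⊗ gᵢ = Σ aᵢ ⊗ ε(hᵢ)d(bᵢ)(gᵢ)₁ ⊗ (gᵢ)₂`;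
(c) `Σ ε(bᵢ)ε(gᵢ) aᵢ ⊗ hᵢ = Σ ε(hᵢ) aᵢ ⊗ d(bᵢ)gᵢ`. -/

lemma repr_smul_right {a : A} (r : Coalgebra.Repr k a (A × A)) :
    ∑ i ∈ r.index, (Coalgebra.counit (r.right i) : k) • r.left i = a := by
  have h := Coalgebra.sum_tmul_counit_eq (R := k) r
  have h2 := congrArg (TensorProduct.rid k A) h
  simp only [map_sum, TensorProduct.rid_tmul, one_smul] at h2
  exact h2

lemma repr_smul_left {a : A} (r : Coalgebra.Repr k a (A × A)) :
    ∑ i ∈ r.index, (Coalgebra.counit (r.left i) : k) • r.right i = a := by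
  have h := Coalgebra.sum_counit_tmul_eq (R := k) r
  have h2 := congrArg (TensorProduct.lid k A) h
  simp only [map_sum, TensorProduct.lid_tmul, one_smul] at h2
  exact h2

lemma comul1_tmul (a : A) (h : H) (ra : Coalgebra.Repr k a (A × A)) (rh : Coalgebra.Repr k h (H × H)) :
    comul1 k A H (a ⊗ₜ[k] h)
      = ∑ i ∈ ra.index, ∑ j ∈ rh.index,
          (ra.left i ⊗ₜ[k] rh.left j) ⊗ₜ[k] (ra.right i ⊗ₜ[k] rh.right j) := by
  simp only [comul1, LinearMap.comp_apply, map_tmul]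
  rw [← ra.eq, ← rh.eq, TensorProduct.sum_tmul, map_sum]
  refine Finset.sum_congr rfl fun i _ => ?_
  rw [TensorProduct.tmul_sum, map_sum]
  refine Finset.sum_congr rfl fun j _ => ?_
  simp [TensorProduct.tensorTensorTensorComm_tmul]

lemma helper_emap_DR :
    map (emap k A H) (LinearMap.id : H →ₗ[k] H) ∘ₗ DRmap k A H = LinearMap.id := by
  apply TensorProduct.ext'
  intro a h
  have ra := Coalgebra.Repr.arbitrary k a
  have rh := Coalgebra.Repr.arbitrary k h
  simp only [LinearMap.comp_apply, DRmap, comul1_tmul k A H a h ra rh, map_sum, map_tmul,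
    LinearMap.id_coe, id_eq, smap, emap, TensorProduct.lid_tmul, TensorProduct.rid_tmul,
    LinearMap.id_apply]
  calc ∑ i ∈ ra.index, ∑ j ∈ rh.index,
        ((Coalgebra.counit (rh.left j) : k) • ra.left i) ⊗ₜ[k]
          ((Coalgebra.counit (ra.right i) : k) • rh.right j)
      = ∑ i ∈ ra.index, ∑ j ∈ rh.index,
        ((Coalgebra.counit (ra.right i) : k) • ra.left i) ⊗ₜ[k]
          ((Coalgebra.counit (rh.left j) : k) • rh.right j) := by
        refine Finset.sum_congr rfl fun i _ => Finset.sum_congr rfl fun j _ => ?_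
        simp [TensorProduct.smul_tmul', TensorProduct.tmul_smul, smul_smul, mul_comm]
    _ = (∑ i ∈ ra.index, (Coalgebra.counit (ra.right i) : k) • ra.left i) ⊗ₜ[k]
          (∑ j ∈ rh.index, (Coalgebra.counit (rh.left j) : k) • rh.right j) := by
        rw [TensorProduct.sum_tmul]
        exact Finset.sum_congr rfl fun i _ => (TensorProduct.tmul_sum _ _ _).symm
    _ = a ⊗ₜ[k] h := by rw [repr_smul_right k A ra, repr_smul_left k H rh]

lemma fmap_tmul (d : A →ₗ[k] H) (b : A) (g : H) (rg : Coalgebra.Repr k g (H × H)) :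
    fmap k A H d (b ⊗ₜ[k] g)
      = ∑ j ∈ rg.index, (d b * rg.left j) ⊗ₜ[k] rg.right j := by
  simp only [fmap, LinearMap.comp_apply, map_tmul, LinearMap.id_coe, id_eq]
  rw [← rg.eq, TensorProduct.tmul_sum, map_sum, map_sum]
  refine Finset.sum_congr rfl fun j _ => ?_
  simp [TensorProduct.assoc_symm_tmul, LinearMap.mul'_apply]

lemma helper_smap_DL (d : A →ₗ[k] H) :
    map (LinearMap.id : H →ₗ[k] H) (smap k A H) ∘ₗ DLmap k A H d = fmap k A H d := by
  apply TensorProduct.ext'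
  intro b g
  have rb := Coalgebra.Repr.arbitrary k b
  have rg := Coalgebra.Repr.arbitrary k g
  rw [LinearMap.comp_apply, fmap_tmul k A H d b g rg]
  simp only [DLmap, LinearMap.comp_apply, comul1_tmul k A H b g rb rg, map_sum, map_tmul,
    LinearMap.id_coe, id_eq, smap, tmap, TensorProduct.lid_tmul, LinearMap.mul'_apply,
    LinearMap.id_apply]
  rw [Finset.sum_comm]
  refine Finset.sum_congr rfl fun j _ => ?_
  let L : A →ₗ[k] H ⊗[k] H :=
    ((TensorProduct.mk k H H).flip (rg.right j)).comp
      ((LinearMap.mulRight k (rg.left j)).comp d)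
  have hL := map_sum L (fun i => (Coalgebra.counit (rb.right i) : k) • rb.left i) rb.index
  rw [repr_smul_right k A rb] at hL
  calc ∑ i ∈ rb.index,
        (d (rb.left i) * rg.left j) ⊗ₜ[k] ((Coalgebra.counit (rb.right i) : k) • rg.right j)
      = ∑ i ∈ rb.index, L ((Coalgebra.counit (rb.right i) : k) • rb.left i) := by
        refine Finset.sum_congr rfl fun i _ => ?_
        simp [L, TensorProduct.tmul_smul, TensorProduct.smul_tmul']
    _ = L b := hL.symm
    _ = (d b * rg.left j) ⊗ₜ[k] rg.right j := by simp [L]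

lemma helper_fmap_counit (d : A →ₗ[k] H) :
    ((TensorProduct.rid k H).toLinearMap
        ∘ₗ LinearMap.lTensor H (Coalgebra.counit : H →ₗ[k] k)) ∘ₗ fmap k A H d
      = tmap k A H d := by
  apply TensorProduct.ext'
  intro b g
  have rg := Coalgebra.Repr.arbitrary k g
  rw [LinearMap.comp_apply, fmap_tmul k A H d b g rg]
  simp only [map_sum, LinearMap.comp_apply, LinearMap.lTensor_tmul,
    LinearEquiv.coe_coe, TensorProduct.rid_tmul, tmap, map_tmul, LinearMap.id_coe, id_eq,
    LinearMap.mul'_apply]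
  have hL := map_sum (LinearMap.mulLeft k (d b))
    (fun j => (Coalgebra.counit (rg.right j) : k) • rg.left j) rg.index
  rw [repr_smul_right k H rg] at hL
  calc ∑ j ∈ rg.index, (Coalgebra.counit (rg.right j) : k) • (d b * rg.left j)
      = ∑ j ∈ rg.index,
          LinearMap.mulLeft k (d b) ((Coalgebra.counit (rg.right j) : k) • rg.left j) := by
        refine Finset.sum_congr rfl fun j _ => ?_
        simp [LinearMap.mulLeft_apply]
    _ = LinearMap.mulLeft k (d b) g := hL.symm
    _ = d b * g := rfl

lemma nat1 :
    map (emap k A H) (LinearMap.id : H ⊗[k] (A ⊗[k] H) →ₗ[k] H ⊗[k] (A ⊗[k] H))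
        ∘ₗ (TensorProduct.assoc k (A ⊗[k] H) H (A ⊗[k] H)).toLinearMap
      = (TensorProduct.assoc k A H (A ⊗[k] H)).toLinearMap
        ∘ₗ map (map (emap k A H) (LinearMap.id : H →ₗ[k] H)) LinearMap.id := by
  apply TensorProduct.ext_threefold
  intro x y z
  simp

lemma nat2 :
    map (LinearMap.id : A →ₗ[k] A) (map (LinearMap.id : H →ₗ[k] H) (smap k A H))
        ∘ₗ (TensorProduct.assoc k A H (A ⊗[k] H)).toLinearMap
      = (TensorProduct.assoc k A H H).toLinearMap
        ∘ₗ map (LinearMap.id : A ⊗[k] H →ₗ[k] A ⊗[k] H) (smap k A H) := by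
  apply TensorProduct.ext_threefold
  intro x y z
  simp

lemma nat3 :
    map (LinearMap.id : A →ₗ[k] A)
        ((TensorProduct.rid k H).toLinearMap
          ∘ₗ LinearMap.lTensor H (Coalgebra.counit : H →ₗ[k] k))
        ∘ₗ (TensorProduct.assoc k A H H).toLinearMap
        ∘ₗ map (LinearMap.id : A ⊗[k] H →ₗ[k] A ⊗[k] H) (smap k A H)
      = (TensorProduct.rid k (A ⊗[k] H)).toLinearMap ∘ₗ map LinearMap.id (counit1 k A H) := by
  apply TensorProduct.ext_fourfold'
  intro w x y z
  simp [smap, counit1, TensorProduct.smul_tmul', TensorProduct.tmul_smul, smul_smul, mul_comm]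


theorem statement3 (act : H ⊗[k] A →ₗ[k] A) (d : A →ₗ[k] H)
    (hcm : HopfCrossedModule k A H act d) :
    ∀ x ∈ cot k A H d,
      map (emap k A H) (DLmap k A H d) x
          = (TensorProduct.assoc k A H (A ⊗[k] H)).toLinearMap x
      ∧ (TensorProduct.assoc k A H H).toLinearMap (map LinearMap.id (smap k A H) x)
          = map (emap k A H) (fmap k A H d) x
      ∧ (TensorProduct.rid k (A ⊗[k] H)) (map LinearMap.id (counit1 k A H) x)
          = map (emap k A H) (tmap k A H d) x := by
  intro x hx
  have hx' : (TensorProduct.assoc k (A ⊗[k] H) H (A ⊗[k] H)).toLinearMap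
      (map (DRmap k A H) LinearMap.id x) = map LinearMap.id (DLmap k A H d) x := hx
  have ha : map (emap k A H) (DLmap k A H d) x
      = (TensorProduct.assoc k A H (A ⊗[k] H)).toLinearMap x := by
    have h1 : map (emap k A H) (DLmap k A H d)
        = map (emap k A H) (LinearMap.id : H ⊗[k] (A ⊗[k] H) →ₗ[k] H ⊗[k] (A ⊗[k] H))
            ∘ₗ map (LinearMap.id : A ⊗[k] H →ₗ[k] A ⊗[k] H) (DLmap k A H d) := by
      rw [← TensorProduct.map_comp]; simp
    rw [h1, LinearMap.comp_apply, ← hx', ← LinearMap.comp_apply, nat1 k A H,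
      LinearMap.comp_apply, ← LinearMap.comp_apply (map _ _) (map _ _),
      ← TensorProduct.map_comp, helper_emap_DR k A H]
    simp
  refine ⟨ha, ?_, ?_⟩
  · have h2 : map (emap k A H) (fmap k A H d)
        = map (LinearMap.id : A →ₗ[k] A) (map (LinearMap.id : H →ₗ[k] H) (smap k A H))
            ∘ₗ map (emap k A H) (DLmap k A H d) := by
      rw [← TensorProduct.map_comp, helper_smap_DL k A H d, LinearMap.id_comp]
    rw [h2, LinearMap.comp_apply, ha]
    have := LinearMap.congr_fun (nat2 k A H) x
    simp only [LinearMap.comp_apply] at this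
    rw [this]
  · have h3 : map (emap k A H) (tmap k A H d)
        = map (LinearMap.id : A →ₗ[k] A)
            ((TensorProduct.rid k H).toLinearMap
              ∘ₗ LinearMap.lTensor H (Coalgebra.counit : H →ₗ[k] k))
            ∘ₗ map (emap k A H) (fmap k A H d) := by
      rw [← TensorProduct.map_comp, helper_fmap_counit k A H d, LinearMap.id_comp]
    have hb : map (emap k A H) (fmap k A H d) x
        = (TensorProduct.assoc k A H H).toLinearMap
            (map (LinearMap.id : A ⊗[k] H →ₗ[k] A ⊗[k] H) (smap k A H) x) := by
      have h2 : map (emap k A H) (fmap k A H d)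
          = map (LinearMap.id : A →ₗ[k] A) (map (LinearMap.id : H →ₗ[k] H) (smap k A H))
              ∘ₗ map (emap k A H) (DLmap k A H d) := by
        rw [← TensorProduct.map_comp, helper_smap_DL k A H d, LinearMap.id_comp]
      rw [h2, LinearMap.comp_apply, ha]
      have := LinearMap.congr_fun (nat2 k A H) x
      simp only [LinearMap.comp_apply] at this
      rw [this]
    rw [h3, LinearMap.comp_apply, hb]
    have := LinearMap.congr_fun (nat3 k A H) x
    simp only [LinearMap.comp_apply, LinearEquiv.coe_coe] at this ⊢
    rw [this]


end
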